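/- Let \widehat{M}_∞ denote the matricial ℓ¹-sum of the family (\widehat{M}_n)_{n∈ℕ}, with embeddings i_n : \widehat{M}_n → \widehat{M}_∞. Then for every matricially normed space E, the map sending a sequence w = (w_1, w_2, …) with w_n ∈ B_{M_n(E)} to the unique completely contractive operator φ^w : \widehat{M}_∞ → E satisfying φ^w ∘ i_n = φ^{w_n} for all n, is a bijection from the product Π_{n∈ℕ} B_{M_n(E)} onto the set of completely contractive operators from \widehat{M}_∞ to E. (Thus \widehat{M}_∞ is the metrically free matricially normed space with a one-point base.) -/

import Mathlib

open scoped BigOperators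
open Matrix

noncomputable section

/-- Block-diagonal sum `u ⊕ w` of two square matrices with entries in `E`. -/
def MatDSum {E : Type*} [Zero E] {m k : ℕ}
    (u : Matrix (Fin m) (Fin m) E) (w : Matrix (Fin k) (Fin k) E) :
    Matrix (Fin (m + k)) (Fin (m + k)) E :=
  Matrix.reindex finSumFinEquiv finSumFinEquiv (Matrix.fromBlocks u 0 0 w)

/-- Left action `S·u` of a scalar matrix on an `E`-valued matrix. -/
def scalLeft {E : Type*} [AddCommMonoid E] [Module ℂ E] {m : ℕ}
    (S : Matrix (Fin m) (Fin m) ℂ) (u : Matrix (Fin m) (Fin m) E) :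
    Matrix (Fin m) (Fin m) E :=
  Matrix.of fun i j => ∑ k, S i k • u k j

/-- Right action `u·S` of a scalar matrix on an `E`-valued matrix. -/
def scalRight {E : Type*} [AddCommMonoid E] [Module ℂ E] {m : ℕ}
    (u : Matrix (Fin m) (Fin m) E) (S : Matrix (Fin m) (Fin m) ℂ) :
    Matrix (Fin m) (Fin m) E :=
  Matrix.of fun i j => ∑ k, S k j • u i k

/-- The operator norm `‖S‖_o` of a complex scalar matrix, i.e. its norm as an
operator on the euclidean (Hilbert) space `ℂⁿ`. -/
noncomputable def opNorm {m : ℕ} (S : Matrix (Fin m) (Fin m) ℂ) : ℝ :=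
  ‖LinearMap.toContinuousLinearMap (Matrix.toEuclideanLin S)‖

/-- The `m`-th amplification of a map `φ : E → F`: apply `φ` entrywise. -/
def matAmpl {E F : Type*} (φ : E → F) {m : ℕ} (u : Matrix (Fin m) (Fin m) E) :
    Matrix (Fin m) (Fin m) F :=
  Matrix.of fun i j => φ (u i j)

/-- The operator `φ^v : M_n → E`, `(λ_{ij}) ↦ Σ_{i,j} λ_{ji} • x_{ij}`, associated with
`v = (x_{ij}) ∈ M_n(E)`. -/
def matPhi {E : Type*} [AddCommMonoid E] [Module ℂ E] {n : ℕ}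
    (v : Matrix (Fin n) (Fin n) E) (a : Matrix (Fin n) (Fin n) ℂ) : E :=
  ∑ i, ∑ j, a j i • v i j

/-- `ν` is a matrix-norm on the complex vector space `E`: each `ν m` is a norm on
`M_m(E)`, and Axioms 1 and 2 of Effros/Ruan hold. -/
def IsMatrixNorm {E : Type} [AddCommGroup E] [Module ℂ E]
    (ν : ∀ m : ℕ, Matrix (Fin m) (Fin m) E → ℝ) : Prop :=
  (∀ (m : ℕ) (u v : Matrix (Fin m) (Fin m) E), ν m (u + v) ≤ ν m u + ν m v) ∧
  (∀ (m : ℕ) (c : ℂ) (u : Matrix (Fin m) (Fin m) E), ν m (c • u) = ‖c‖ * ν m u) ∧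
  (∀ (m : ℕ) (u : Matrix (Fin m) (Fin m) E), ν m u = 0 ↔ u = 0) ∧
  (∀ (m k : ℕ) (u : Matrix (Fin m) (Fin m) E),
      ν (m + k) (MatDSum u (0 : Matrix (Fin k) (Fin k) E)) = ν m u) ∧
  (∀ (m : ℕ) (S : Matrix (Fin m) (Fin m) ℂ) (u : Matrix (Fin m) (Fin m) E),
      ν m (scalLeft S u) ≤ opNorm S * ν m u) ∧
  (∀ (m : ℕ) (u : Matrix (Fin m) (Fin m) E) (S : Matrix (Fin m) (Fin m) ℂ),
      ν m (scalRight u S) ≤ ν m u * opNorm S)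

/-- The set of values `‖(φ^v)_m(u)‖_m` over all proper couples `(E, v)`, i.e. over all
matricially normed spaces `E` and all `v` in the closed unit ball of `M_n(E)`. -/
def hatNormSet (n : ℕ) {m : ℕ}
    (u : Matrix (Fin m) (Fin m) (Matrix (Fin n) (Fin n) ℂ)) : Set ℝ :=
  { r | ∃ (E : Type) (_ : AddCommGroup E) (_ : Module ℂ E)
        (ν : ∀ m' : ℕ, Matrix (Fin m') (Fin m') E → ℝ),
        IsMatrixNorm ν ∧
        ∃ v : Matrix (Fin n) (Fin n) E, ν n v ≤ 1 ∧ r = ν m (matAmpl (matPhi v) u) }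

/-- The matrix-norm of the matricially normed space `M̂_n`:
`‖u‖_m = sup { ‖(φ^v)_m(u)‖_m : (E, v) a proper couple }`. -/
noncomputable def hatNorm (n : ℕ) {m : ℕ}
    (u : Matrix (Fin m) (Fin m) (Matrix (Fin n) (Fin n) ℂ)) : ℝ :=
  sSup (hatNormSet n u)

/-- `φ` is a completely contractive (linear) operator between the matricially normed
spaces `(E, νE)` and `(F, νF)`: every amplification `φ_m` is contractive. -/
def IsCC {E F : Type} [AddCommGroup E] [Module ℂ E] [AddCommGroup F] [Module ℂ F]
    (νE : ∀ m : ℕ, Matrix (Fin m) (Fin m) E → ℝ)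
    (νF : ∀ m : ℕ, Matrix (Fin m) (Fin m) F → ℝ) (φ : E → F) : Prop :=
  IsLinearMap ℂ φ ∧
  ∀ (m : ℕ) (u : Matrix (Fin m) (Fin m) E), νF m (matAmpl φ u) ≤ νE m u

open DirectSum

/-- The `i`-th component matrix of a matrix with entries in a direct sum. -/
def compMat {ι : Type} {E : ι → Type} [∀ i, AddCommGroup (E i)] {m : ℕ}
    (u : Matrix (Fin m) (Fin m) (⨁ i, E i)) (i : ι) :
    Matrix (Fin m) (Fin m) (E i) :=
  Matrix.of fun a b => u a b i

/-- The matrix-norm of the matricial `ℓ¹`-sum of the family `(E i, ν i)`: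
`‖⊕_i u_i‖_m = Σ_i ‖u_i‖_m` (a finite sum, since only finitely many components of a
matrix over the algebraic direct sum are nonzero). -/
noncomputable def l1Norm {ι : Type} {E : ι → Type} [∀ i, AddCommGroup (E i)]
    (ν : ∀ i, ∀ m : ℕ, Matrix (Fin m) (Fin m) (E i) → ℝ)
    (m : ℕ) (u : Matrix (Fin m) (Fin m) (⨁ i, E i)) : ℝ :=
  ∑ᶠ i, ν i m (compMat u i)

/-- The underlying space of `M̂_∞`, the matricial `ℓ¹`-sum of the family
`(M̂_n)_{n ∈ ℕ}` (the index `k : ℕ` corresponds to the summand `M̂_{k+1}`). -/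
abbrev HatInf : Type := ⨁ k : ℕ, Matrix (Fin (k + 1)) (Fin (k + 1)) ℂ

/-- The matrix-norm of `M̂_∞`, i.e. of the matricial `ℓ¹`-sum of the `M̂_n`. -/
noncomputable def hatInfNorm : ∀ m : ℕ, Matrix (Fin m) (Fin m) HatInf → ℝ :=
  l1Norm (fun k m (u : Matrix (Fin m) (Fin m) (Matrix (Fin (k + 1)) (Fin (k + 1)) ℂ)) =>
    hatNorm (k + 1) u)

/-- The natural embedding `i_n : M̂_n → M̂_∞` (index `k` corresponds to `n = k+1`). -/
noncomputable def hatInfEmb (k : ℕ) :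
    Matrix (Fin (k + 1)) (Fin (k + 1)) ℂ →ₗ[ℂ] HatInf :=
  DirectSum.lof ℂ ℕ (fun k => Matrix (Fin (k + 1)) (Fin (k + 1)) ℂ) k


/-! ### Auxiliary lemmas -/

lemma opNorm_stdBasisMatrix {m : ℕ} (i j : Fin m) :
    opNorm (Matrix.single i j (1 : ℂ)) ≤ 1 := by
  rw [opNorm]
  refine ContinuousLinearMap.opNorm_le_bound _ zero_le_one fun x => ?_
  rw [one_mul]
  have hx : (LinearMap.toContinuousLinearMap
      (Matrix.toEuclideanLin (Matrix.single i j (1 : ℂ)))) x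
      = EuclideanSpace.single i (x j) := by
    ext a
    show (∑ b, Matrix.single i j (1 : ℂ) a b * x b)
      = EuclideanSpace.single i (x j) a
    rw [EuclideanSpace.single_apply]
    simp [Matrix.single, ite_and, ite_mul, eq_comm]
  rw [hx, EuclideanSpace.norm_single]
  rw [EuclideanSpace.norm_eq]
  have h1 : ‖x j‖ = Real.sqrt (‖x j‖ ^ 2) := by
    rw [Real.sqrt_sq (norm_nonneg _)]
  rw [h1]
  exact Real.sqrt_le_sqrt (Finset.single_le_sum (f := fun i => ‖x i‖ ^ 2)
    (fun i _ => sq_nonneg _) (Finset.mem_univ j))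

variable {E : Type} [AddCommGroup E] [Module ℂ E]
  {ν : ∀ m : ℕ, Matrix (Fin m) (Fin m) E → ℝ}

lemma nu_zero (h : IsMatrixNorm ν) (m : ℕ) : ν m 0 = 0 :=
  (h.2.2.1 m 0).mpr rfl

lemma nu_neg (h : IsMatrixNorm ν) (m : ℕ) (u : Matrix (Fin m) (Fin m) E) :
    ν m (-u) = ν m u := by
  have := h.2.1 m (-1) u
  simpa using this

lemma nu_nonneg (h : IsMatrixNorm ν) (m : ℕ) (u : Matrix (Fin m) (Fin m) E) :
    0 ≤ ν m u := by
  have h1 := h.1 m u (-u)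
  rw [add_neg_cancel, nu_zero h, nu_neg h] at h1
  linarith

lemma nu_sum_le (h : IsMatrixNorm ν) (m : ℕ) {ι : Type*} (s : Finset ι)
    (f : ι → Matrix (Fin m) (Fin m) E) :
    ν m (∑ i ∈ s, f i) ≤ ∑ i ∈ s, ν m (f i) := by
  classical
  induction s using Finset.induction_on with
  | empty => simp [nu_zero h]
  | insert _ _ hx ih =>
    rename_i a s
    rw [Finset.sum_insert hx, Finset.sum_insert hx]
    exact le_trans (h.1 m _ _) (by linarith)


omit [AddCommGroup E] [Module ℂ E] in
lemma nu_reindex {a b : ℕ} (hab : a = b) (u : Matrix (Fin a) (Fin a) E) :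
    ν b (Matrix.reindex (finCongr hab) (finCongr hab) u) = ν a u := by
  subst hab
  simp

lemma opNorm_nonneg {m : ℕ} (S : Matrix (Fin m) (Fin m) ℂ) : 0 ≤ opNorm S :=
  norm_nonneg _

lemma reindex_MatDSum_single {E : Type} [AddCommGroup E] [Module ℂ E] {k : ℕ} (x : E) :
    Matrix.reindex (finCongr (Nat.add_comm 1 k)) (finCongr (Nat.add_comm 1 k))
      (MatDSum (Matrix.single (0 : Fin 1) 0 x) (0 : Matrix (Fin k) (Fin k) E))
      = Matrix.single (0 : Fin (k + 1)) 0 x := by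
  ext i j
  simp only [MatDSum, Matrix.reindex_apply, Matrix.submatrix_apply]
  rcases hi : finSumFinEquiv.symm ((finCongr (Nat.add_comm 1 k)).symm i) with a | a <;>
    rcases hj : finSumFinEquiv.symm ((finCongr (Nat.add_comm 1 k)).symm j) with b | b <;>
    have hi' := congrArg (fun t => (finSumFinEquiv t).val) hi <;>
    have hj' := congrArg (fun t => (finSumFinEquiv t).val) hj <;>
    simp at hi' hj' <;>
    simp only [Matrix.fromBlocks, Matrix.single, Matrix.of_apply, Sum.elim_inl,
      Sum.elim_inr, Matrix.zero_apply]
  · have h1 : i = 0 := Fin.ext (by simpa using hi')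
    have h2 : j = 0 := Fin.ext (by simpa using hj')
    simp [h1, h2, eq_iff_true_of_subsingleton]
  all_goals
    rw [if_neg]
    rintro ⟨h1, h2⟩
    rw [← h1] at hi'
    rw [← h2] at hj'
    simp at hi' hj'
    omega

section Aux3
variable {E : Type} [AddCommGroup E] [Module ℂ E]
  {ν : ∀ m : ℕ, Matrix (Fin m) (Fin m) E → ℝ}

lemma nu_single (h : IsMatrixNorm ν) (k : ℕ) (x : E) :
    ν (k + 1) (Matrix.single (0 : Fin (k + 1)) 0 x)
      = ν 1 (Matrix.single (0 : Fin 1) 0 x) := by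
  have h1 := h.2.2.2.1 1 k (Matrix.single (0 : Fin 1) 0 x)
  rw [← reindex_MatDSum_single x, nu_reindex (ν := ν) (Nat.add_comm 1 k), h1]

lemma scalLeft_std {m : ℕ} (a c b : Fin m) (x : E)
    (u : Matrix (Fin m) (Fin m) E) (hu : u = Matrix.single c b x) :
    scalLeft (Matrix.single a c (1 : ℂ)) u = Matrix.single a b x := by
  subst hu
  ext i j
  simp [scalLeft, Matrix.single, ite_and, ite_smul, Finset.sum_ite_eq, eq_comm]
  try (split <;> simp_all)


lemma scalRight_std {m : ℕ} (c d b : Fin m) (x : E) :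
    scalRight (Matrix.single c d x) (Matrix.single d b (1 : ℂ))
      = Matrix.single c b x := by
  ext i j
  simp [scalRight, Matrix.single, ite_and, ite_smul, Finset.sum_ite_eq, eq_comm]
  try (split <;> simp_all)


lemma nu_std_le (h : IsMatrixNorm ν) {m : ℕ} (a b c d : Fin m) (x : E) :
    ν m (Matrix.single a b x) ≤ ν m (Matrix.single c d x) := by
  have h2 : ν m (scalRight (Matrix.single c d x) (Matrix.single d b (1:ℂ)))
      ≤ ν m (Matrix.single c d x) := by
    calc ν m _ ≤ ν m (Matrix.single c d x) * opNorm (Matrix.single d b (1:ℂ)) :=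
          h.2.2.2.2.2 m _ _
    _ ≤ ν m (Matrix.single c d x) * 1 :=
          mul_le_mul_of_nonneg_left (opNorm_stdBasisMatrix d b) (nu_nonneg h m _)
    _ = _ := mul_one _
  have h3 : ν m (Matrix.single a b x)
      ≤ ν m (scalRight (Matrix.single c d x) (Matrix.single d b (1:ℂ))) := by
    rw [← scalLeft_std a c b x _ (scalRight_std c d b x)]
    calc ν m _ ≤ opNorm (Matrix.single a c (1:ℂ)) * ν m _ := h.2.2.2.2.1 m _ _
    _ ≤ 1 * ν m _ := mul_le_mul_of_nonneg_right (opNorm_stdBasisMatrix a c) (nu_nonneg h m _)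
    _ = _ := one_mul _
  linarith

lemma scal_extract {m : ℕ} (i a b j : Fin m) (v : Matrix (Fin m) (Fin m) E) :
    scalLeft (Matrix.single i a (1 : ℂ))
      (scalRight v (Matrix.single b j (1 : ℂ)))
      = Matrix.single i j (v a b) := by
  ext p q
  simp [scalLeft, scalRight, Matrix.single, ite_and, ite_smul,
    Finset.sum_ite_eq, eq_comm]
  try (split <;> simp_all)


lemma nu_extract (h : IsMatrixNorm ν) {m : ℕ} (i a b j : Fin m)
    (v : Matrix (Fin m) (Fin m) E) :
    ν m (Matrix.single i j (v a b)) ≤ ν m v := by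
  rw [← scal_extract i a b j v]
  calc ν m _ ≤ opNorm (Matrix.single i a (1:ℂ)) * ν m (scalRight v _) :=
        h.2.2.2.2.1 m _ _
  _ ≤ 1 * ν m (scalRight v (Matrix.single b j (1:ℂ))) :=
        mul_le_mul_of_nonneg_right (opNorm_stdBasisMatrix i a) (nu_nonneg h m _)
  _ = ν m (scalRight v (Matrix.single b j (1:ℂ))) := one_mul _
  _ ≤ ν m v * opNorm (Matrix.single b j (1:ℂ)) := h.2.2.2.2.2 m _ _
  _ ≤ ν m v * 1 := mul_le_mul_of_nonneg_left (opNorm_stdBasisMatrix b j) (nu_nonneg h m _)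
  _ = ν m v := mul_one _

lemma scalLeft_diag {m : ℕ} (C : Matrix (Fin m) (Fin m) ℂ) (x : E) :
    scalLeft C (∑ r : Fin m, Matrix.single r r x)
      = Matrix.of fun p q => C p q • x := by
  ext p q
  simp [scalLeft, Matrix.single, Matrix.sum_apply, ite_and,
    Finset.sum_ite_eq, eq_comm, smul_ite]

lemma nu_spread (h : IsMatrixNorm ν) {m : ℕ} (C : Matrix (Fin (m+1)) (Fin (m+1)) ℂ) (x : E) :
    ν (m+1) (Matrix.of fun p q => C p q • x)
      ≤ opNorm C * ((m+1) * ν 1 (Matrix.single (0 : Fin 1) 0 x)) := by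
  rw [← scalLeft_diag]
  calc ν (m+1) _ ≤ opNorm C * ν (m+1) (∑ r : Fin (m+1), Matrix.single r r x) :=
        h.2.2.2.2.1 _ _ _
  _ ≤ opNorm C * ((m+1) * ν 1 (Matrix.single (0 : Fin 1) 0 x)) := by
      refine mul_le_mul_of_nonneg_left ?_ (opNorm_nonneg C)
      calc ν (m+1) _ ≤ ∑ r : Fin (m+1), ν (m+1) (Matrix.single r r x) :=
            nu_sum_le h _ _ _
      _ ≤ ∑ _r : Fin (m+1), ν 1 (Matrix.single (0 : Fin 1) 0 x) := by
            refine Finset.sum_le_sum fun r _ => ?_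
            rw [← nu_single h m x]
            exact nu_std_le h r r 0 0 x
      _ = (m+1) * ν 1 (Matrix.single (0 : Fin 1) 0 x) := by
            rw [Finset.sum_const, Finset.card_univ]
            simp [nsmul_eq_mul]

end Aux3

section Aux4
variable {E : Type} [AddCommGroup E] [Module ℂ E]
  {ν : ∀ m : ℕ, Matrix (Fin m) (Fin m) E → ℝ}

lemma matAmpl_decomp {n m : ℕ} (v : Matrix (Fin n) (Fin n) E)
    (u : Matrix (Fin m) (Fin m) (Matrix (Fin n) (Fin n) ℂ)) :
    matAmpl (matPhi v) u
      = ∑ i : Fin n, ∑ j : Fin n, Matrix.of fun a b => ((u a b) j i) • v i j := by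
  ext a b
  simp [matAmpl, matPhi, Matrix.sum_apply]

lemma core_bound (h : IsMatrixNorm ν) (n m : ℕ) (v : Matrix (Fin (n+1)) (Fin (n+1)) E)
    (hv : ν (n+1) v ≤ 1)
    (u : Matrix (Fin (m+1)) (Fin (m+1)) (Matrix (Fin (n+1)) (Fin (n+1)) ℂ)) :
    ν (m+1) (matAmpl (matPhi v) u)
      ≤ ∑ i : Fin (n+1), ∑ j : Fin (n+1),
          opNorm (Matrix.of fun a b => (u a b) j i) * (m+1) := by
  rw [matAmpl_decomp]
  calc ν (m+1) _ ≤ ∑ i : Fin (n+1),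
        ν (m+1) (∑ j : Fin (n+1), Matrix.of fun a b => ((u a b) j i) • v i j) :=
      nu_sum_le h _ _ _
  _ ≤ ∑ i : Fin (n+1), ∑ j : Fin (n+1),
        ν (m+1) (Matrix.of fun a b => ((u a b) j i) • v i j) :=
      Finset.sum_le_sum fun i _ => nu_sum_le h _ _ _
  _ ≤ _ := by
      refine Finset.sum_le_sum fun i _ => Finset.sum_le_sum fun j _ => ?_
      calc ν (m+1) (Matrix.of fun a b => ((u a b) j i) • v i j)
          ≤ opNorm (Matrix.of fun a b => (u a b) j i)
            * ((m+1) * ν 1 (Matrix.single (0 : Fin 1) 0 (v i j))) :=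
          nu_spread h _ _
      _ ≤ opNorm (Matrix.of fun a b => (u a b) j i) * ((m+1) * 1) := by
          refine mul_le_mul_of_nonneg_left ?_ (opNorm_nonneg _)
          refine mul_le_mul_of_nonneg_left ?_ (by positivity)
          rw [← nu_single h n (v i j)]
          exact le_trans (nu_extract h 0 i j 0 v) hv
      _ = opNorm (Matrix.of fun a b => (u a b) j i) * (m+1) := by ring

lemma matAmpl_matPhi_zero {n m : ℕ} (v : Matrix (Fin n) (Fin n) E) :
    matAmpl (matPhi v) (0 : Matrix (Fin m) (Fin m) (Matrix (Fin n) (Fin n) ℂ)) = 0 := by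
  ext a b
  simp [matAmpl, matPhi]

lemma matAmpl_zero_phi {n m : ℕ}
    (u : Matrix (Fin m) (Fin m) (Matrix (Fin n) (Fin n) ℂ)) :
    matAmpl (matPhi (0 : Matrix (Fin n) (Fin n) E)) u = 0 := by
  ext a b
  simp [matAmpl, matPhi]

end Aux4

section Aux5
variable {E : Type} [iG : AddCommGroup E] [iM : Module ℂ E]

set_option maxHeartbeats 1000000 in
lemma zero_mem_hatNormSet {ν : ∀ m : ℕ, Matrix (Fin m) (Fin m) E → ℝ}
    (h : IsMatrixNorm ν) {n m : ℕ}
    (u : Matrix (Fin m) (Fin m) (Matrix (Fin n) (Fin n) ℂ)) :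
    (0 : ℝ) ∈ hatNormSet n u := by
  rw [hatNormSet, Set.mem_setOf_eq]
  refine ⟨E, iG, iM, ν, h, 0, ?_, ?_⟩
  · rw [nu_zero h]; norm_num
  · rw [matAmpl_zero_phi, nu_zero h]

lemma hatNormSet_bddAbove {n m : ℕ}
    (u : Matrix (Fin m) (Fin m) (Matrix (Fin (n+1)) (Fin (n+1)) ℂ)) :
    BddAbove (hatNormSet (n+1) u) := by
  match m with
  | 0 =>
    refine ⟨0, fun r hr => ?_⟩
    rw [hatNormSet, Set.mem_setOf_eq] at hr
    obtain ⟨F, _, _, ν', h', v, hv, rfl⟩ := hr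
    have : matAmpl (matPhi v) u = 0 := by
      ext i j
      exact i.elim0
    rw [this, nu_zero h']
  | m + 1 =>
    refine ⟨∑ i : Fin (n+1), ∑ j : Fin (n+1),
      opNorm (Matrix.of fun a b => (u a b) j i) * (m+1), fun r hr => ?_⟩
    rw [hatNormSet, Set.mem_setOf_eq] at hr
    obtain ⟨F, _, _, ν', h', v, hv, rfl⟩ := hr
    exact core_bound h' n m v hv u

set_option maxHeartbeats 1000000 in
lemma le_hatNorm {ν : ∀ m : ℕ, Matrix (Fin m) (Fin m) E → ℝ}
    (h : IsMatrixNorm ν) {n m : ℕ} (v : Matrix (Fin (n+1)) (Fin (n+1)) E)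
    (hv : ν (n+1) v ≤ 1)
    (u : Matrix (Fin m) (Fin m) (Matrix (Fin (n+1)) (Fin (n+1)) ℂ)) :
    ν m (matAmpl (matPhi v) u) ≤ hatNorm (n+1) u := by
  refine le_csSup (hatNormSet_bddAbove u) ?_
  rw [hatNormSet, Set.mem_setOf_eq]
  refine ⟨E, iG, iM, ν, h, v, hv, ?_⟩
  rfl

lemma hatNorm_zero' {ν : ∀ m : ℕ, Matrix (Fin m) (Fin m) E → ℝ}
    (h : IsMatrixNorm ν) {n m : ℕ}
    {u : Matrix (Fin m) (Fin m) (Matrix (Fin (n+1)) (Fin (n+1)) ℂ)} (hu : u = 0) :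
    hatNorm (n+1) u = 0 := by
  subst hu
  refine le_antisymm (Real.sSup_le ?_ le_rfl) ?_
  · rintro r hr
    rw [hatNormSet, Set.mem_setOf_eq] at hr
    obtain ⟨F, _, _, ν', h', v, hv, rfl⟩ := hr
    rw [matAmpl_matPhi_zero, nu_zero h']
  · exact le_csSup (hatNormSet_bddAbove 0) (zero_mem_hatNormSet h 0)

end Aux5

section Aux6
variable {E : Type} [iG : AddCommGroup E] [iM : Module ℂ E]

lemma matPhi_std {n : ℕ} (v : Matrix (Fin n) (Fin n) E) (i j : Fin n) :
    matPhi v (Matrix.single j i (1 : ℂ)) = v i j := by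
  simp [matPhi, Matrix.single, ite_and, ite_smul, Finset.sum_ite_eq, eq_comm]

/-- `matPhi v` as a linear map. -/
def phiLin {n : ℕ} (v : Matrix (Fin n) (Fin n) E) :
    Matrix (Fin n) (Fin n) ℂ →ₗ[ℂ] E where
  toFun := matPhi v
  map_add' a b := by
    simp [matPhi, add_smul, Finset.sum_add_distrib]
  map_smul' c a := by
    simp [matPhi, Finset.smul_sum, smul_smul]

lemma matAmpl_special {n : ℕ} (v : Matrix (Fin (n+1)) (Fin (n+1)) E) :
    matAmpl (matPhi v)
      (Matrix.of fun i j : Fin (n+1) => Matrix.single j i (1 : ℂ)) = v := by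
  ext i j
  simp [matAmpl, matPhi_std]

lemma hatNorm_special_le_one (n : ℕ) :
    hatNorm (n+1)
      (Matrix.of fun i j : Fin (n+1) => Matrix.single j i (1 : ℂ)) ≤ 1 := by
  refine Real.sSup_le ?_ zero_le_one
  rintro r hr
  rw [hatNormSet, Set.mem_setOf_eq] at hr
  obtain ⟨F, _, _, ν', h', v, hv, rfl⟩ := hr
  rw [matAmpl_special]
  exact hv

lemma hatInfNorm_eq_sum {νE : ∀ m : ℕ, Matrix (Fin m) (Fin m) E → ℝ}
    (hE : IsMatrixNorm νE) (m : ℕ) (u : Matrix (Fin m) (Fin m) HatInf) (S : Finset ℕ)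
    (hS : ∀ k ∉ S, compMat u k = 0) :
    hatInfNorm m u = ∑ k ∈ S, hatNorm (k+1) (compMat u k) := by
  rw [hatInfNorm, l1Norm]
  refine finsum_eq_finset_sum_of_support_subset _ fun k hk => ?_
  by_contra hkS
  refine hk ?_
  show hatNorm (k + 1) (compMat u k) = 0
  exact hatNorm_zero' hE (hS k (by simpa using hkS))

end Aux6

/-- **Theorem 3.** `M̂_∞` is the metrically free matricially normed space with a
one-point base: for every matricially normed space `(E, νE)`, the assignment sending a
sequence `w = (w_1, w_2, …)`, `w_n ∈ B_{M_n(E)}`, to the unique completely contractive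
operator `φ^w : M̂_∞ → E` with `φ^w ∘ i_n = φ^{w_n}` for all `n`, is a bijection from
`Π_n B_{M_n(E)}` onto the set of completely contractive operators `M̂_∞ → E`. -/
theorem hatInf_metrically_free (E : Type) [AddCommGroup E] [Module ℂ E]
    (νE : ∀ m : ℕ, Matrix (Fin m) (Fin m) E → ℝ) (hE : IsMatrixNorm νE) :
    (∀ w : ∀ k : ℕ, { v : Matrix (Fin (k + 1)) (Fin (k + 1)) E // νE (k + 1) v ≤ 1 },
      ∃! ψ : HatInf → E, IsCC hatInfNorm νE ψ ∧
        ∀ (k : ℕ) (a : Matrix (Fin (k + 1)) (Fin (k + 1)) ℂ),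
          ψ (hatInfEmb k a) = matPhi (w k).1 a) ∧
    (∀ ψ : HatInf → E, IsCC hatInfNorm νE ψ →
      ∃! w : ∀ k : ℕ, { v : Matrix (Fin (k + 1)) (Fin (k + 1)) E // νE (k + 1) v ≤ 1 },
        ∀ (k : ℕ) (a : Matrix (Fin (k + 1)) (Fin (k + 1)) ℂ),
          ψ (hatInfEmb k a) = matPhi (w k).1 a) := by
  classical
  constructor
  · -- Part 1 : existence and uniqueness of the extension
    intro w
    set ψ₀ : HatInf →ₗ[ℂ] E :=
      DirectSum.toModule ℂ ℕ E (fun k => phiLin (w k).1) with hψ₀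
    have hemb : ∀ (k : ℕ) (a : Matrix (Fin (k + 1)) (Fin (k + 1)) ℂ),
        ψ₀ (hatInfEmb k a) = matPhi (w k).1 a := fun k a => by
      rw [hψ₀]
      exact DirectSum.toModule_lof (R := ℂ) (ι := ℕ)
        (M := fun k => Matrix (Fin (k + 1)) (Fin (k + 1)) ℂ) (N := E)
        (φ := fun k => phiLin (w k).1) k a
    refine ⟨⇑ψ₀, ⟨⟨⟨fun x y => map_add ψ₀ x y, fun c x => map_smul ψ₀ c x⟩, ?_⟩, hemb⟩, ?_⟩
    · -- complete contractivity
      intro m u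
      set S : Finset ℕ := Finset.univ.biUnion
        (fun p : Fin m × Fin m => (u p.1 p.2).support) with hS
      have hsub : ∀ a b : Fin m, (u a b).support ⊆ S := fun a b k hk =>
        Finset.mem_biUnion.2 ⟨(a, b), Finset.mem_univ _, hk⟩
      have hcomp : ∀ k ∉ S, compMat u k = 0 := by
        intro k hk
        refine Matrix.ext fun a b => ?_
        show u a b k = 0
        by_contra hne
        exact hk (hsub a b (DFinsupp.mem_support_iff.2 hne))
      have hdecomp : ∀ a b : Fin m,
          u a b = ∑ k ∈ S, DirectSum.lof ℂ ℕ
            (fun k => Matrix (Fin (k + 1)) (Fin (k + 1)) ℂ) k ((u a b) k) := by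
        intro a b
        have h1 := DirectSum.sum_support_of (u a b)
        calc u a b = ∑ k ∈ (u a b).support, DirectSum.of _ k ((u a b) k) := h1.symm
        _ = ∑ k ∈ S, DirectSum.of _ k ((u a b) k) := by
            refine Finset.sum_subset (hsub a b) fun k _ hk => ?_
            rw [DFinsupp.notMem_support_iff.1 hk, map_zero]
        _ = _ := by rfl
      have hampl : matAmpl (⇑ψ₀) u
          = ∑ k ∈ S, matAmpl (matPhi (w k).1) (compMat u k) := by
        ext a b
        rw [Matrix.sum_apply]
        show ψ₀ (u a b) = _
        rw [hdecomp a b, map_sum]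
        refine Finset.sum_congr rfl fun k _ => ?_
        rw [hψ₀]
        exact DirectSum.toModule_lof (R := ℂ) (ι := ℕ)
          (M := fun k => Matrix (Fin (k + 1)) (Fin (k + 1)) ℂ) (N := E)
          (φ := fun k => phiLin (w k).1) k ((u a b) k)
      calc νE m (matAmpl (⇑ψ₀) u)
          = νE m (∑ k ∈ S, matAmpl (matPhi (w k).1) (compMat u k)) := by rw [hampl]
      _ ≤ ∑ k ∈ S, νE m (matAmpl (matPhi (w k).1) (compMat u k)) := nu_sum_le hE _ _ _
      _ ≤ ∑ k ∈ S, hatNorm (k + 1) (compMat u k) :=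
          Finset.sum_le_sum fun k _ => le_hatNorm hE _ (w k).2 _
      _ = hatInfNorm m u := (hatInfNorm_eq_sum hE m u S hcomp).symm
    · -- uniqueness
      rintro ψ' ⟨⟨hlin, _⟩, hcomm⟩
      funext x
      induction x using DirectSum.induction_on with
      | zero => rw [hlin.map_zero, map_zero]
      | of k a => exact (hcomm k a).trans (hemb k a).symm
      | add x y hx hy => rw [hlin.map_add, map_add, hx, hy]
  · -- Part 2 : existence and uniqueness of the base point sequence
    intro ψ hψ
    obtain ⟨hlin, hcontr⟩ := hψ
    have hψw : ∀ k : ℕ,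
        νE (k + 1) (Matrix.of fun i j : Fin (k + 1) =>
          ψ (hatInfEmb k (Matrix.single j i (1 : ℂ)))) ≤ 1 := by
      intro k
      set U : Matrix (Fin (k + 1)) (Fin (k + 1)) HatInf :=
        Matrix.of fun i j => hatInfEmb k (Matrix.single j i (1 : ℂ)) with hU
      have h1 : (Matrix.of fun i j : Fin (k + 1) =>
          ψ (hatInfEmb k (Matrix.single j i (1 : ℂ)))) = matAmpl ψ U := rfl
      have h2 : ∀ k' ∉ ({k} : Finset ℕ), compMat U k' = 0 := by
        intro k' hk'
        refine Matrix.ext fun a b => ?_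
        show (hatInfEmb k (Matrix.single b a (1 : ℂ))) k' = 0
        exact DirectSum.of_eq_of_ne _ _ _ (fun hkk => hk' (by simp [hkk]))
      have h3 : compMat U k
          = Matrix.of fun i j : Fin (k + 1) => Matrix.single j i (1 : ℂ) := by
        refine Matrix.ext fun a b => ?_
        show (hatInfEmb k (Matrix.single b a (1 : ℂ))) k = _
        exact DirectSum.of_eq_same k _
      calc νE (k + 1) _ = νE (k + 1) (matAmpl ψ U) := by rw [h1]
      _ ≤ hatInfNorm (k + 1) U := hcontr _ _
      _ = ∑ k' ∈ ({k} : Finset ℕ), hatNorm (k' + 1) (compMat U k') :=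
          hatInfNorm_eq_sum hE _ U {k} h2
      _ = hatNorm (k + 1) (compMat U k) := Finset.sum_singleton _ _
      _ ≤ 1 := by rw [h3]; exact hatNorm_special_le_one k
    refine ⟨fun k => ⟨Matrix.of fun i j =>
      ψ (hatInfEmb k (Matrix.single j i (1 : ℂ))), hψw k⟩, ?_, ?_⟩
    · -- the embedding property
      intro k a
      set f := IsLinearMap.mk' ψ hlin with hf
      have hfψ : ∀ x, ψ x = f x := fun x => rfl
      have ha : a = ∑ i : Fin (k + 1), ∑ j : Fin (k + 1),
          (a j i) • Matrix.single j i (1 : ℂ) := by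
        have := Matrix.matrix_eq_sum_single a
        rw [Finset.sum_comm]
        simpa [Matrix.smul_single, smul_eq_mul] using this
      have hg : ∀ s : Matrix (Fin (k + 1)) (Fin (k + 1)) ℂ,
          ψ (hatInfEmb k s) = (f.comp (hatInfEmb k)) s := fun s => rfl
      conv_lhs => rw [ha]
      rw [hg, map_sum]
      show _ = ∑ i : Fin (k + 1), ∑ j : Fin (k + 1),
        a j i • ψ (hatInfEmb k (Matrix.single j i (1 : ℂ)))
      refine Finset.sum_congr rfl fun i _ => ?_
      rw [map_sum]
      refine Finset.sum_congr rfl fun j _ => ?_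
      rw [_root_.map_smul]
      rfl
    · -- uniqueness of the sequence
      intro w' hw'
      funext k
      refine Subtype.ext ?_
      ext i j
      show (w' k).1 i j = ψ (hatInfEmb k (Matrix.single j i (1 : ℂ)))
      rw [hw' k (Matrix.single j i (1 : ℂ)), matPhi_std]
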